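/- arXiv:1611.06058 — 2 statements merged into one kernel-verified Lean document; each statement's English description precedes it below -/
import Mathlib

section
/- Let G be a finite group, F a field of characteristic p > 0, and P a p-subgroup of G. Then I_G(P) := Σ FC⁺, summing over conjugacy classes C whose defect group is G-conjugate to a subgroup of P, is an ideal of Z(FG). -/
set_option synthInstance.maxHeartbeats 400000

/-- The class sum `C⁺ = ∑_{x ∈ C} x` of a conjugacy class `C` of `G`. -/
noncomputable def classSum (F : Type*) [Field F] (G : Type*) [Group G] [Fintype G]
    (C : ConjClasses G) : MonoidAlgebra F G :=
  ∑ x ∈ (Set.toFinite C.carrier).toFinset, MonoidAlgebra.single x (1 : F)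

/-- `D` is a defect group of the conjugacy class `C`: a Sylow `p`-subgroup of the centralizer
`C_G(x)` of some `x ∈ C`, viewed as a subgroup of `G`. -/
def IsDefectGroup (p : ℕ) {G : Type*} [Group G] (C : ConjClasses G) (D : Subgroup G) : Prop :=
  ∃ x ∈ C.carrier, ∃ Q : Sylow p ↥(Subgroup.centralizer {x}),
    D = Subgroup.map (Subgroup.centralizer {x}).subtype Q.toSubgroup

/-- `δ(C) ≤_G P`: some defect group of `C` has a `G`-conjugate contained in `P`. -/
def DefectLE (p : ℕ) {G : Type*} [Group G] (C : ConjClasses G) (P : Subgroup G) : Prop :=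
  ∃ D : Subgroup G, IsDefectGroup p C D ∧
    ∃ g : G, Subgroup.map (MulAut.conj g).toMonoidHom D ≤ P

/-- The `F`-span `I_G(P)` of the class sums `C⁺` with `δ(C) ≤_G P`. -/
noncomputable def IGP (F : Type*) [Field F] (p : ℕ) (G : Type*) [Group G] [Fintype G]
    (P : Subgroup G) : Submodule F (MonoidAlgebra F G) :=
  Submodule.span F {z | ∃ C : ConjClasses G, DefectLE p C P ∧ z = classSum F G C}

section Aux

open Subgroup

theorem mem_classFinset {G : Type*} [Group G] [Fintype G] {C : ConjClasses G} {x : G} :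
    x ∈ (Set.toFinite C.carrier).toFinset ↔ ConjClasses.mk x = C := by
  simp [ConjClasses.mem_carrier_iff_mk_eq]

theorem classSum_central (F : Type*) [Field F] (G : Type*) [Group G] [Fintype G]
    (C : ConjClasses G) : classSum F G C ∈ Subalgebra.center F (MonoidAlgebra F G) := by
  rw [Subalgebra.mem_center_iff]
  intro b
  classical
  ext y
  rw [classSum, Finset.mul_sum, Finset.sum_mul]
  rw [MonoidAlgebra.coeff_sum, MonoidAlgebra.coeff_sum, Finsupp.finset_sum_apply, Finsupp.finset_sum_apply]
  simp only [MonoidAlgebra.mul_single_apply, MonoidAlgebra.single_mul_apply, mul_one, one_mul]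
  apply Finset.sum_nbij' (fun x => y * x * y⁻¹) (fun x => y⁻¹ * x * y)
  · intro x hx
    rw [mem_classFinset] at hx ⊢
    rw [← hx, ConjClasses.mk_eq_mk_iff_isConj]
    exact (isConj_iff.2 ⟨y, rfl⟩).symm
  · intro x hx
    rw [mem_classFinset] at hx ⊢
    rw [← hx, ConjClasses.mk_eq_mk_iff_isConj]
    exact (isConj_iff.2 ⟨y⁻¹, by group⟩).symm
  · intro x _; group
  · intro x _; group
  · intro x _; congr 1; group

theorem central_apply_conj {F : Type*} [Field F] {G : Type*} [Group G]
    {a : MonoidAlgebra F G} (ha : a ∈ Subalgebra.center F (MonoidAlgebra F G))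
    (g x : G) : a.coeff (g * x * g⁻¹) = a.coeff x := by
  rw [Subalgebra.mem_center_iff] at ha
  have h := congrArg (fun w => w.coeff (g * x)) (ha (MonoidAlgebra.single g 1))
  simp [MonoidAlgebra.mul_single_apply, MonoidAlgebra.single_mul_apply, mul_assoc] at h
  rw [mul_assoc]; exact h.symm

theorem central_apply_isConj {F : Type*} [Field F] {G : Type*} [Group G]
    {a : MonoidAlgebra F G} (ha : a ∈ Subalgebra.center F (MonoidAlgebra F G))
    {x y : G} (h : IsConj x y) : a.coeff x = a.coeff y := by
  obtain ⟨c, hc⟩ := isConj_iff.1 h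
  rw [← hc, central_apply_conj ha]

/-- A choice of representative for a conjugacy class. -/
noncomputable def crep {G : Type*} [Group G] (E : ConjClasses G) : G :=
  E.exists_rep.choose

theorem crep_spec {G : Type*} [Group G] (E : ConjClasses G) : ConjClasses.mk (crep E) = E :=
  E.exists_rep.choose_spec

theorem central_decomp (F : Type*) [Field F] (G : Type*) [Group G] [Fintype G]
    [Fintype (ConjClasses G)]
    (w : MonoidAlgebra F G) (hw : w ∈ Subalgebra.center F (MonoidAlgebra F G)) :
    w = ∑ E : ConjClasses G, w.coeff (crep E) • classSum F G E := by
  classical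
  have h1 : w = ∑ x : G, MonoidAlgebra.single x (w.coeff x) := by
    ext y
    rw [MonoidAlgebra.coeff_sum, Finsupp.finset_sum_apply]
    simp [Finsupp.single_apply]
  conv_lhs => rw [h1, ← Finset.sum_fiberwise Finset.univ (fun x => ConjClasses.mk x)
    (fun x => MonoidAlgebra.single x (w.coeff x))]
  refine Finset.sum_congr rfl fun E _ => ?_
  rw [classSum, Finset.smul_sum]
  rw [show (Finset.univ.filter (fun x => ConjClasses.mk x = E))
      = (Set.toFinite (ConjClasses.carrier E)).toFinset by
    ext x
    rw [Finset.mem_filter, Set.Finite.mem_toFinset, ConjClasses.mem_carrier_iff_mk_eq]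
    simp]
  apply Finset.sum_congr rfl
  intro x hx
  rw [mem_classFinset] at hx
  rw [MonoidAlgebra.smul_single, smul_eq_mul, mul_one]
  congr 1
  apply central_apply_isConj hw
  rw [← ConjClasses.mk_eq_mk_iff_isConj, hx, crep_spec]

open MulAction in
theorem pgroup_sum_eq_zero {F : Type*} [Field F] {p : ℕ} [Fact p.Prime] [CharP F p]
    {H : Type*} [Group H] [Fintype H] (hH : IsPGroup p H)
    {α : Type*} [Fintype α] [MulAction H α] (f : α → F) (s : Finset α)
    (hstable : ∀ (h : H) (a : α), a ∈ s → h • a ∈ s)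
    (hinv : ∀ (h : H) (a : α), f (h • a) = f a)
    (hnofix : ∀ a ∈ s, ∃ h : H, h • a ≠ a) :
    ∑ a ∈ s, f a = 0 := by
  classical
  apply Finset.sum_cancels_of_partition_cancels (orbitRel H α)
  intro x hx
  have horb : (s.filter fun a => (orbitRel H α) a x) = (orbit H x).toFinset := by
    ext a
    simp only [Finset.mem_filter, Set.mem_toFinset]
    constructor
    · rintro ⟨-, h⟩; exact h
    · intro h
      obtain ⟨h₀, rfl⟩ := h
      exact ⟨hstable _ _ hx, ⟨h₀, rfl⟩⟩
  rw [horb]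
  have hconst : ∀ a ∈ (orbit H x).toFinset, f a = f x := by
    intro a ha
    rw [Set.mem_toFinset] at ha
    obtain ⟨h₀, rfl⟩ := ha
    exact hinv _ _
  rw [Finset.sum_congr rfl hconst, Finset.sum_const]
  have hdvd : (orbit H x).toFinset.card ∣ Fintype.card H := by
    rw [Set.toFinset_card]
    exact ⟨_, (card_orbit_mul_card_stabilizer_eq_card_group H x).symm⟩
  obtain ⟨n, hn⟩ := IsPGroup.iff_card.mp hH
  rw [← Nat.card_eq_fintype_card, hn] at hdvd
  obtain ⟨k, hk, hcard⟩ := (Nat.dvd_prime_pow (Fact.out : p.Prime)).mp hdvd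
  have hk0 : k ≠ 0 := by
    intro h
    rw [h, pow_zero] at hcard
    have hxmem : x ∈ (orbit H x).toFinset := by
      rw [Set.mem_toFinset]; exact mem_orbit_self x
    obtain ⟨h₀, hh₀⟩ := hnofix x hx
    apply hh₀
    have hmem : h₀ • x ∈ (orbit H x).toFinset := by
      rw [Set.mem_toFinset]; exact mem_orbit x h₀
    rw [Finset.card_eq_one] at hcard
    obtain ⟨b, hb⟩ := hcard
    rw [hb, Finset.mem_singleton] at hmem hxmem
    rw [hmem, hxmem]
  have hz : ((orbit H x).toFinset.card : F) = 0 := by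
    rw [hcard, CharP.cast_eq_zero_iff F p]
    exact dvd_pow_self p hk0
  rw [nsmul_eq_mul, hz, zero_mul]

variable {p : ℕ} {G : Type*} [Group G]

/-- `D` is (the image in `G` of) a Sylow `p`-subgroup of `H`. -/
def IsSylowIn (p : ℕ) {G : Type*} [Group G] (H D : Subgroup G) : Prop :=
  D ≤ H ∧ IsPGroup p D ∧ ∀ K : Subgroup G, IsPGroup p K → D ≤ K → K ≤ H → K = D

theorem exists_sylow_iff [Fact p.Prime] (H D : Subgroup G) :
    (∃ Q : Sylow p H, D = Subgroup.map H.subtype Q.toSubgroup) ↔ IsSylowIn p H D := by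
  constructor
  · rintro ⟨Q, rfl⟩
    refine ⟨map_subtype_le _, Q.2.map _, fun K hK hDK hKH => ?_⟩
    have h1 : Q.toSubgroup ≤ K.comap H.subtype := by
      intro q hq
      simp only [mem_comap]
      exact hDK ⟨q, hq, rfl⟩
    have h2 := Q.3 (hK.comap_subtype) h1
    have h3 : Subgroup.map H.subtype (K.comap H.subtype) = K := by
      rw [map_comap_eq, range_subtype, inf_eq_right.mpr hKH]
    rw [← h3, h2]
  · rintro ⟨hDH, hD, hmax⟩
    refine ⟨⟨D.comap H.subtype, hD.comap_subtype, fun {R} hR hQR => ?_⟩, ?_⟩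
    · have hRD : Subgroup.map H.subtype R = D := by
        apply hmax _ (hR.map _)
        · intro d hd
          have hdH : d ∈ H := hDH hd
          exact ⟨⟨d, hdH⟩, hQR (mem_comap.mpr hd), rfl⟩
        · exact map_subtype_le _
      have h4 := comap_mono (f := H.subtype) hRD.le
      rw [comap_map_eq_self_of_injective (subtype_injective H)] at h4
      exact le_antisymm h4 hQR
    · show D = Subgroup.map H.subtype (D.comap H.subtype)
      rw [map_comap_eq, range_subtype, inf_eq_right.mpr hDH]

theorem map_conj_map_conj_inv (g : G) (K : Subgroup G) :
    Subgroup.map (MulAut.conj g).toMonoidHom (Subgroup.map (MulAut.conj g⁻¹).toMonoidHom K) = K := by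
  rw [map_map]
  have h : (MulAut.conj g).toMonoidHom.comp (MulAut.conj g⁻¹).toMonoidHom = MonoidHom.id G := by
    ext x; simp; group
  rw [h, map_id]

theorem map_conj_inv_map_conj (g : G) (K : Subgroup G) :
    Subgroup.map (MulAut.conj g⁻¹).toMonoidHom (Subgroup.map (MulAut.conj g).toMonoidHom K) = K := by
  have h := map_conj_map_conj_inv g⁻¹ K
  rwa [inv_inv] at h

theorem map_conj_mul (g c : G) (K : Subgroup G) :
    Subgroup.map (MulAut.conj (g * c)).toMonoidHom K =
      Subgroup.map (MulAut.conj g).toMonoidHom (Subgroup.map (MulAut.conj c).toMonoidHom K) := by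
  rw [map_map]
  congr 1
  ext x; simp [mul_assoc]

theorem mem_map_conj_iff {g x : G} {K : Subgroup G} :
    x ∈ Subgroup.map (MulAut.conj g).toMonoidHom K ↔ g⁻¹ * x * g ∈ K := by
  constructor
  · rintro ⟨k, hk, rfl⟩
    have h : g⁻¹ * (MulAut.conj g).toMonoidHom k * g = k := by simp; group
    rwa [h]
  · intro h
    refine ⟨g⁻¹ * x * g, h, ?_⟩
    simp; group

theorem centralizer_conj (g x : G) :
    Subgroup.centralizer {g * x * g⁻¹} =
      Subgroup.map (MulAut.conj g).toMonoidHom (Subgroup.centralizer {x}) := by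
  ext y
  rw [mem_map_conj_iff, mem_centralizer_singleton_iff, mem_centralizer_singleton_iff]
  constructor
  · intro h
    have h2 := congrArg (fun z => g⁻¹ * z * g) h
    simpa [mul_assoc] using h2
  · intro h
    have h2 := congrArg (fun z => g * z * g⁻¹) h
    simpa [mul_assoc] using h2

theorem IsSylowIn.conj {H D : Subgroup G} (h : IsSylowIn p H D) (g : G) :
    IsSylowIn p (Subgroup.map (MulAut.conj g).toMonoidHom H)
      (Subgroup.map (MulAut.conj g).toMonoidHom D) := by
  obtain ⟨hDH, hD, hmax⟩ := h
  refine ⟨map_mono hDH, hD.map _, fun K hK hDK hKH => ?_⟩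
  have h1 : Subgroup.map (MulAut.conj g⁻¹).toMonoidHom K = D := by
    apply hmax _ (hK.map _)
    · rw [← map_conj_inv_map_conj g D]
      exact map_mono hDK
    · rw [← map_conj_inv_map_conj g H]
      exact map_mono hKH
  rw [← map_conj_map_conj_inv g K, h1]

theorem map_subtype_map_conj {H : Subgroup G} (h : H) (Q : Subgroup H) :
    Subgroup.map H.subtype (Subgroup.map (MulAut.conj h).toMonoidHom Q)
      = Subgroup.map (MulAut.conj (h : G)).toMonoidHom (Subgroup.map H.subtype Q) := by
  rw [map_map, map_map]
  congr 1

theorem IsSylowIn.exists_conj [Fact p.Prime] [Finite G] {H D D' : Subgroup G}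
    (h : IsSylowIn p H D) (h' : IsSylowIn p H D') :
    ∃ c : G, Subgroup.map (MulAut.conj c).toMonoidHom D = D' := by
  obtain ⟨Q, rfl⟩ := (exists_sylow_iff H D).mpr h
  obtain ⟨Q', rfl⟩ := (exists_sylow_iff H D').mpr h'
  obtain ⟨h₀, hh₀⟩ := MulAction.exists_smul_eq H Q Q'
  refine ⟨(h₀ : G), ?_⟩
  rw [← map_subtype_map_conj]
  congr 1
  rw [← hh₀]
  rfl

theorem isDefectGroup_iff [Fact p.Prime] {C : ConjClasses G} {D : Subgroup G} :
    IsDefectGroup p C D ↔ ∃ x, ConjClasses.mk x = C ∧ IsSylowIn p (Subgroup.centralizer {x}) D := by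
  unfold IsDefectGroup
  simp only [ConjClasses.mem_carrier_iff_mk_eq]
  constructor
  · rintro ⟨x, hx, Q, rfl⟩
    exact ⟨x, hx, (exists_sylow_iff _ _).mp ⟨Q, rfl⟩⟩
  · rintro ⟨x, hx, h⟩
    obtain ⟨Q, rfl⟩ := (exists_sylow_iff _ _).mpr h
    exact ⟨x, hx, Q, rfl⟩

theorem IsDefectGroup.exists_conj [Fact p.Prime] [Finite G] {C : ConjClasses G}
    {D D' : Subgroup G} (h : IsDefectGroup p C D) (h' : IsDefectGroup p C D') :
    ∃ c : G, Subgroup.map (MulAut.conj c).toMonoidHom D = D' := by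
  obtain ⟨x, hx, hD⟩ := isDefectGroup_iff.mp h
  obtain ⟨y, hy, hD'⟩ := isDefectGroup_iff.mp h'
  have hconj : IsConj x y := by
    rw [← ConjClasses.mk_eq_mk_iff_isConj, hx, hy]
  obtain ⟨c, hc⟩ := isConj_iff.1 hconj
  have hcent : Subgroup.centralizer {y} =
      Subgroup.map (MulAut.conj c).toMonoidHom (Subgroup.centralizer {x}) := by
    rw [← hc, centralizer_conj]
  have hDc : IsSylowIn p (Subgroup.centralizer {y})
      (Subgroup.map (MulAut.conj c).toMonoidHom D) := by
    rw [hcent]; exact hD.conj c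
  obtain ⟨h₀, hh₀⟩ := hDc.exists_conj hD'
  exact ⟨h₀ * c, by rw [map_conj_mul, hh₀]⟩

/-- If `δ(C) ≤_G P` then every defect group of `C` has a conjugate inside `P`. -/
theorem DefectLE.forall_defect [Fact p.Prime] [Finite G] {C : ConjClasses G} {P : Subgroup G}
    (h : DefectLE p C P) {D' : Subgroup G} (h' : IsDefectGroup p C D') :
    ∃ g : G, Subgroup.map (MulAut.conj g).toMonoidHom D' ≤ P := by
  obtain ⟨D, hD, g, hg⟩ := h
  obtain ⟨c, hc⟩ := h'.exists_conj hD
  refine ⟨g * c, ?_⟩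
  rw [map_conj_mul, hc]
  exact hg

end Aux

/-- `I_G(P)` is an ideal of the center `Z(FG)`: it is contained in `Z(FG)` and closed under
multiplication by elements of `Z(FG)`. -/
theorem stmt_8 (F : Type*) [Field F] (p : ℕ) [Fact p.Prime] [CharP F p]
    (G : Type*) [Group G] [Fintype G] (P : Subgroup G) (hP : IsPGroup p P) :
    (∀ z ∈ IGP F p G P, z ∈ Subalgebra.center F (MonoidAlgebra F G)) ∧
    (∀ a ∈ Subalgebra.center F (MonoidAlgebra F G), ∀ z ∈ IGP F p G P,
      a * z ∈ IGP F p G P) := by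
  classical
  haveI : Fintype (ConjClasses G) := Fintype.ofFinite _
  constructor
  · intro z hz
    have hle : IGP F p G P ≤ Subalgebra.toSubmodule (Subalgebra.center F (MonoidAlgebra F G)) := by
      rw [IGP, Submodule.span_le]
      rintro w ⟨C, -, rfl⟩
      exact classSum_central F G C
    exact hle hz
  · intro a ha z hz
    -- reduce to generators via span induction
    refine Submodule.span_induction ?_ ?_ ?_ ?_ hz
    · -- generators
      rintro w ⟨C, hC, rfl⟩
      -- the product is central
      have hwc : a * classSum F G C ∈ Subalgebra.center F (MonoidAlgebra F G) :=
        mul_mem ha (classSum_central F G C)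
      rw [central_decomp F G _ hwc]
      apply Submodule.sum_mem
      intro E _
      by_cases h0 : (a * classSum F G C).coeff (crep E) = 0
      · rw [h0, zero_smul]; exact Submodule.zero_mem _
      apply Submodule.smul_mem
      apply Submodule.subset_span
      refine ⟨E, ?_, rfl⟩
      -- the heart of the matter
      set e := crep E with he
      -- pick a Sylow p-subgroup of the centralizer of e
      obtain ⟨Q₀⟩ : Nonempty (Sylow p ↥(Subgroup.centralizer {e})) := inferInstance
      set Q : Subgroup G := Subgroup.map (Subgroup.centralizer {e}).subtype Q₀.toSubgroup with hQ
      have hQcent : Q ≤ Subgroup.centralizer {e} := Subgroup.map_subtype_le _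
      have hQp : IsPGroup p Q := Q₀.2.map _
      -- the p-group acting by conjugation
      set H : Subgroup (ConjAct G) :=
        Subgroup.map (ConjAct.toConjAct : G ≃* ConjAct G).toMonoidHom Q with hH
      have hHp : IsPGroup p H := hQp.map _
      -- compute the coefficient as a sum over the class C
      have hcoeff : (a * classSum F G C).coeff e
          = ∑ v ∈ (Set.toFinite C.carrier).toFinset, a.coeff (e * v⁻¹) := by
        rw [classSum, Finset.mul_sum, MonoidAlgebra.coeff_sum, Finsupp.finset_sum_apply]
        apply Finset.sum_congr rfl
        intro v _
        rw [MonoidAlgebra.mul_single_apply, mul_one]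
      -- invariance and stability
      have hcontra : ¬ (∀ v ∈ (Set.toFinite C.carrier).toFinset, ∃ h : H, h • v ≠ v) := by
        intro hno
        apply h0
        rw [hcoeff]
        exact pgroup_sum_eq_zero hHp (fun v => a.coeff (e * v⁻¹)) _
          (by
            rintro ⟨h₁, q, hq, rfl⟩ v hv
            rw [mem_classFinset] at hv ⊢
            rw [← hv]
            simp only [Subgroup.smul_def, ConjAct.smul_def, MulEquiv.coe_toMonoidHom,
              ConjAct.ofConjAct_toConjAct, ConjClasses.mk_eq_mk_iff_isConj]
            exact (isConj_iff.2 ⟨q, rfl⟩).symm)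
          (by
            rintro ⟨h₁, q, hq, rfl⟩ v
            simp only [Subgroup.smul_def, ConjAct.smul_def, MulEquiv.coe_toMonoidHom,
              ConjAct.ofConjAct_toConjAct]
            have hqe : q * e = e * q :=
              Subgroup.mem_centralizer_singleton_iff.mp (hQcent hq)
            have hkey : e * (q * v * q⁻¹)⁻¹ = q * (e * v⁻¹) * q⁻¹ := by
              calc e * (q * v * q⁻¹)⁻¹ = (e * q) * v⁻¹ * q⁻¹ := by group
              _ = (q * e) * v⁻¹ * q⁻¹ := by rw [hqe]
              _ = q * (e * v⁻¹) * q⁻¹ := by group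
            rw [hkey, central_apply_conj ha])
          hno
      push_neg at hcontra
      obtain ⟨v, hv, hvfix⟩ := hcontra
      rw [mem_classFinset] at hv
      -- Q centralizes v
      have hQv : Q ≤ Subgroup.centralizer {v} := by
        intro q hq
        rw [Subgroup.mem_centralizer_singleton_iff]
        have hfix := hvfix ⟨ConjAct.toConjAct q, ⟨q, hq, rfl⟩⟩
        simp only [Subgroup.smul_def, ConjAct.smul_def, MulEquiv.coe_toMonoidHom,
          ConjAct.ofConjAct_toConjAct] at hfix
        calc q * v = (q * v * q⁻¹) * q := by group
        _ = v * q := by rw [hfix]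
      -- extend Q to a Sylow subgroup of the centralizer of v
      obtain ⟨R, hR⟩ :=
        (hQp.comap_subtype (K := Subgroup.centralizer {v})).exists_le_sylow
      set D' : Subgroup G :=
        Subgroup.map (Subgroup.centralizer {v}).subtype R.toSubgroup with hD'
      have hQD' : Q ≤ D' := by
        intro q hq
        exact ⟨⟨q, hQv hq⟩, hR (Subgroup.mem_comap.mpr hq), rfl⟩
      have hD'defect : IsDefectGroup p C D' :=
        ⟨v, ConjClasses.mem_carrier_iff_mk_eq.mpr hv, R, rfl⟩
      have hQdefect : IsDefectGroup p E Q :=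
        ⟨e, ConjClasses.mem_carrier_iff_mk_eq.mpr (crep_spec E), Q₀, rfl⟩
      obtain ⟨g, hg⟩ := hC.forall_defect hD'defect
      exact ⟨Q, hQdefect, g, le_trans (Subgroup.map_mono hQD') hg⟩
    · rw [mul_zero]
      exact Submodule.zero_mem _
    · intro x y _ _ hx hy
      rw [mul_add]
      exact Submodule.add_mem _ hx hy
    · intro c x _ hx
      rw [Algebra.mul_smul_comm]
      exact Submodule.smul_mem _ c hx
end

section
/- Let G be a finite group, F a field of characteristic p > 0, and P a p-subgroup of G. The Brauer homomorphism Br_P : Z(FG) → Z(F C_G(P)), defined on a class sum by restricting the sum to those elements lying in C_G(P), is an F-algebra homomorphism. -/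
set_option synthInstance.maxHeartbeats 400000

open Finset in
/-- Characterization of the center of a group algebra via coefficients. -/
theorem brauer_mem_center_iff {F : Type*} [Field F] {G : Type*} [Group G]
    (z : MonoidAlgebra F G) :
    z ∈ Subalgebra.center F (MonoidAlgebra F G) ↔ ∀ h g : G, z.coeff (h * g * h⁻¹) = z.coeff g := by
  constructor
  · intro hz h g
    have h1 : MonoidAlgebra.single h (1 : F) * z = z * MonoidAlgebra.single h 1 :=
      (Subalgebra.mem_center_iff.mp hz) (MonoidAlgebra.single h 1)
    have h2 := DFunLike.congr_fun (congrArg MonoidAlgebra.coeff h1) (h * g)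
    rw [MonoidAlgebra.coeff_single_mul_apply, MonoidAlgebra.coeff_mul_single_apply, one_mul, mul_one,
      inv_mul_cancel_left] at h2
    exact h2.symm
  · intro hz
    rw [Subalgebra.mem_center_iff]
    intro f
    induction f using MonoidAlgebra.induction_linear with
    | zero => simp
    | add f g hf hg => rw [add_mul, mul_add, hf, hg]
    | single a b =>
      ext x
      rw [MonoidAlgebra.coeff_single_mul_apply, MonoidAlgebra.coeff_mul_single_apply]
      have h1 : a⁻¹ * x = a⁻¹ * (x * a⁻¹) * (a⁻¹)⁻¹ := by group
      rw [h1, hz, mul_comm]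

/-- Multiplication in a group algebra over a finite group, as a sum over the whole group. -/
theorem brauer_mul_apply_univ {F : Type*} [Field F] {G : Type*} [Group G] [Fintype G]
    (f g : MonoidAlgebra F G) (x : G) :
    (f * g).coeff x = ∑ a : G, f.coeff a * g.coeff (a⁻¹ * x) := by
  rw [MonoidAlgebra.coeff_mul_apply_left, Finsupp.sum]
  apply Finset.sum_subset (Finset.subset_univ _)
  intro y _ hy
  rw [Finsupp.notMem_support_iff.mp hy, zero_mul]

/-- Summing a `P`-conjugation-invariant function over a finite group in characteristic `p`
equals summing it over the centralizer of the `p`-group `P`. -/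
theorem brauer_sum_eq {F : Type*} [Field F] {p : ℕ} [Fact p.Prime] [CharP F p]
    {G : Type*} [Group G] [Fintype G] (P : Subgroup G) (hP : IsPGroup p P)
    (f : G → F) (hf : ∀ u ∈ P, ∀ x, f (u * x * u⁻¹) = f x)
    (s : Finset G) (hs : ∀ x, x ∈ s ↔ x ∈ Subgroup.centralizer (P : Set G)) :
    ∑ x : G, f x = ∑ x ∈ s, f x := by
  classical
  set Q : Subgroup (ConjAct G) := P.map (ConjAct.toConjAct : G ≃* ConjAct G).toMonoidHom
    with hQdef
  have hQ : IsPGroup p Q := hP.map _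
  -- fixed points of the conjugation action of Q are the centralizer of P
  have hfix : ∀ x : G, x ∈ Subgroup.centralizer (P : Set G) ↔ ∀ q : ↥Q, q • x = x := by
    intro x
    constructor
    · intro hx q
      obtain ⟨u, hu, hq⟩ := Subgroup.mem_map.mp q.2
      rw [Submonoid.smul_def, ← hq]
      simp only [MulEquiv.coe_toMonoidHom] at *
      rw [ConjAct.toConjAct_smul]
      have := Subgroup.mem_centralizer_iff.mp hx u hu
      rw [this, mul_inv_cancel_right]
    · intro hx
      rw [Subgroup.mem_centralizer_iff]
      intro u hu
      have hq : (ConjAct.toConjAct u) ∈ Q := Subgroup.mem_map.mpr ⟨u, hu, rfl⟩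
      have := hx ⟨ConjAct.toConjAct u, hq⟩
      rw [Submonoid.smul_def] at this
      simp only at this
      rw [ConjAct.toConjAct_smul] at this
      calc u * x = u * x * u⁻¹ * u := by group
      _ = x * u := by rw [this]
  have hinv : ∀ (q : ↥Q) (x : G), f (q • x) = f x := by
    intro q x
    obtain ⟨u, hu, hq⟩ := Subgroup.mem_map.mp q.2
    rw [Submonoid.smul_def, ← hq]
    simp only [MulEquiv.coe_toMonoidHom]
    rw [ConjAct.toConjAct_smul]
    exact hf u hu x
  have hsub : s ⊆ Finset.univ := Finset.subset_univ s
  rw [← Finset.sum_sdiff hsub]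
  have hzero : ∑ x ∈ Finset.univ \ s, f x = 0 := by
    rw [← Finset.sum_fiberwise (Finset.univ \ s)
      (fun x => (Quotient.mk'' x : MulAction.orbitRel.Quotient ↥Q G)) f]
    apply Finset.sum_eq_zero
    intro ω _
    by_cases hne : ((Finset.univ \ s).filter
        (fun x => (Quotient.mk'' x : MulAction.orbitRel.Quotient ↥Q G) = ω)).Nonempty
    swap
    · rw [Finset.not_nonempty_iff_eq_empty.mp hne, Finset.sum_empty]
    obtain ⟨x, hx⟩ := hne
    have hxT := (Finset.mem_filter.mp hx).1
    have hxω := (Finset.mem_filter.mp hx).2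
    have hxnc : x ∉ Subgroup.centralizer (P : Set G) := by
      intro h
      exact (Finset.mem_sdiff.mp hxT).2 ((hs x).mpr h)
    have horb : ((Finset.univ \ s).filter
        (fun y => (Quotient.mk'' y : MulAction.orbitRel.Quotient ↥Q G) = ω))
        = (MulAction.orbit ↥Q x).toFinset := by
      ext y
      simp only [Finset.mem_filter, Finset.mem_sdiff, Finset.mem_univ, true_and,
        Set.mem_toFinset]
      constructor
      · rintro ⟨-, hy⟩
        rw [← hxω] at hy
        exact MulAction.orbitRel_apply.mp (Quotient.eq''.mp hy)
      · intro hy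
        refine ⟨?_, ?_⟩
        · intro hys
          have hyc := (hs y).mp hys
          obtain ⟨q, hq⟩ := hy
          have hq' : q • x = y := hq
          have hxy : x = y := by
            calc x = q⁻¹ • (q • x) := by rw [inv_smul_smul]
            _ = q⁻¹ • y := by rw [hq']
            _ = y := (hfix y).mp hyc q⁻¹
          exact hxnc (hxy ▸ hyc)
        · rw [← hxω]
          exact Quotient.eq''.mpr (MulAction.orbitRel_apply.mpr hy)
    rw [horb]
    have hconst : ∀ y ∈ (MulAction.orbit ↥Q x).toFinset, f y = f x := by
      intro y hy
      obtain ⟨q, hq⟩ := Set.mem_toFinset.mp hy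
      have hq' : q • x = y := hq
      rw [← hq']
      exact hinv q x
    rw [Finset.sum_congr rfl hconst, Finset.sum_const]
    -- the orbit has cardinality a positive power of p
    have hcard_dvd : Fintype.card (MulAction.orbit ↥Q x) ∣ Fintype.card ↥Q := by
      rw [← MulAction.card_orbit_mul_card_stabilizer_eq_card_group ↥Q x]
      exact dvd_mul_right _ _
    obtain ⟨n, hn⟩ := IsPGroup.iff_card.mp hQ
    rw [Nat.card_eq_fintype_card] at hn
    obtain ⟨k, hk_le, hk⟩ := (Nat.dvd_prime_pow Fact.out).mp (hn ▸ hcard_dvd)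
    have hk1 : k ≠ 0 := by
      intro hk0
      rw [hk0, pow_zero] at hk
      have hx_mem : ∀ y ∈ MulAction.orbit ↥Q x, y = x := by
        intro y hy
        have := Fintype.card_le_one_iff.mp (le_of_eq hk) ⟨y, hy⟩ ⟨x, MulAction.mem_orbit_self x⟩
        exact Subtype.ext_iff.mp this
      apply hxnc
      rw [hfix x]
      intro q
      exact hx_mem _ (MulAction.mem_orbit x q)
    have hcast : (((MulAction.orbit ↥Q x).toFinset.card : ℕ) : F) = 0 := by
      rw [Set.toFinset_card, hk]
      push_cast
      rw [CharP.cast_eq_zero F p, zero_pow hk1]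
    rw [nsmul_eq_mul, hcast, zero_mul]
  rw [hzero, zero_add]

/-- The Brauer homomorphism `Br_P : Z(FG) → Z(F C_G(P))`, given on a central element
`∑ a_g g` by restricting the sum to those `g` lying in `C_G(P)`, is an `F`-algebra
homomorphism. -/
theorem stmt_10 (F : Type*) [Field F] (p : ℕ) [Fact p.Prime] [CharP F p]
    (G : Type*) [Group G] [Fintype G] (P : Subgroup G) (hP : IsPGroup p P) :
    ∃ Br : Subalgebra.center F (MonoidAlgebra F G) →ₐ[F]
        Subalgebra.center F (MonoidAlgebra F ↥(Subgroup.centralizer (P : Set G))),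
      ∀ (z : Subalgebra.center F (MonoidAlgebra F G))
        (g : ↥(Subgroup.centralizer (P : Set G))),
        (Br z : MonoidAlgebra F ↥(Subgroup.centralizer (P : Set G))).coeff g
          = (z : MonoidAlgebra F G).coeff (g : G) := by
  classical
  letI : Fintype ↥(Subgroup.centralizer (P : Set G)) := Fintype.ofFinite _
  set C := Subgroup.centralizer (P : Set G) with hCdef
  -- the raw restriction map
  let res : MonoidAlgebra F G → MonoidAlgebra F ↥C := fun z =>
    MonoidAlgebra.ofCoeff (Finsupp.comapDomain (Subtype.val) z.coeff (Subtype.val_injective.injOn))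
  have res_apply : ∀ (z : MonoidAlgebra F G) (a : ↥C), (res z).coeff a = z.coeff ↑a := fun z a => rfl
  -- restriction preserves centrality
  have res_center : ∀ z : MonoidAlgebra F G, z ∈ Subalgebra.center F (MonoidAlgebra F G) →
      res z ∈ Subalgebra.center F (MonoidAlgebra F ↥C) := by
    intro z hz
    rw [brauer_mem_center_iff] at hz ⊢
    intro h g
    rw [res_apply, res_apply]
    have : ((h * g * h⁻¹ : ↥C) : G) = ↑h * ↑g * (↑h)⁻¹ := by simp
    rw [this]
    exact hz ↑h ↑g
  -- key multiplicativity
  have res_mul : ∀ z w : MonoidAlgebra F G,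
      z ∈ Subalgebra.center F (MonoidAlgebra F G) →
      w ∈ Subalgebra.center F (MonoidAlgebra F G) →
      res (z * w) = res z * res w := by
    intro z w hz hw
    rw [brauer_mem_center_iff] at hz hw
    ext c
    rw [res_apply, brauer_mul_apply_univ, brauer_mul_apply_univ]
    have hR : ∀ a : ↥C, (res z).coeff a * (res w).coeff (a⁻¹ * c) = z.coeff ↑a * w.coeff ((↑a)⁻¹ * ↑c) := by
      intro a
      have hco : ((a⁻¹ * c : ↥C) : G) = (↑a)⁻¹ * ↑c := by simp
      rw [res_apply, res_apply, hco]
    rw [Finset.sum_congr rfl (fun a _ => hR a)]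
    let emb : ↥C ↪ G := ⟨Subtype.val, Subtype.val_injective⟩
    have hs : ∀ x, x ∈ Finset.univ.map emb ↔ x ∈ C := by
      intro x
      simp only [Finset.mem_map, Finset.mem_univ, true_and, emb,
        Function.Embedding.coeFn_mk]
      constructor
      · rintro ⟨a, rfl⟩; exact a.2
      · intro hx; exact ⟨⟨x, hx⟩, rfl⟩
    have hInv : ∀ u ∈ P, ∀ x : G,
        z.coeff (u * x * u⁻¹) * w.coeff ((u * x * u⁻¹)⁻¹ * ↑c) = z.coeff x * w.coeff (x⁻¹ * ↑c) := by
      intro u hu x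
      have hcu : u⁻¹ * (c : G) = ↑c * u⁻¹ :=
        Subgroup.mem_centralizer_iff.mp c.2 u⁻¹ (inv_mem hu)
      have h1 : (u * x * u⁻¹)⁻¹ * ↑c = u * (x⁻¹ * ↑c) * u⁻¹ := by
        have e1 : (u * x * u⁻¹)⁻¹ * (c : G) = u * x⁻¹ * (u⁻¹ * ↑c) := by group
        rw [e1, hcu]
        group
      rw [hz u x, h1, hw u (x⁻¹ * ↑c)]
    rw [brauer_sum_eq P hP (fun a => z.coeff a * w.coeff (a⁻¹ * ↑c)) hInv (Finset.univ.map emb) hs,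
      Finset.sum_map]
    rfl
  -- assemble the algebra homomorphism
  refine ⟨{ toFun := fun z => ⟨res z.1, res_center z.1 z.2⟩,
            map_one' := ?_, map_mul' := ?_, map_zero' := ?_, map_add' := ?_,
            commutes' := ?_ }, fun z g => rfl⟩
  · apply Subtype.ext
    show res (1 : MonoidAlgebra F G) = (1 : MonoidAlgebra F ↥C)
    ext a
    rw [res_apply]
    rw [MonoidAlgebra.one_def, MonoidAlgebra.one_def, MonoidAlgebra.coeff_single, MonoidAlgebra.coeff_single, Finsupp.single_apply,
      Finsupp.single_apply]
    congr 1
    simp only [eq_iff_iff]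
    constructor
    · intro h; exact Subtype.ext h.symm |>.symm
    · intro h; rw [← h]; rfl
  · intro z w
    apply Subtype.ext
    exact res_mul z.1 w.1 z.2 w.2
  · apply Subtype.ext
    show res (0 : MonoidAlgebra F G) = (0 : MonoidAlgebra F ↥C)
    ext a
    rw [res_apply]
    rfl
  · intro z w
    apply Subtype.ext
    show res (z.1 + w.1) = res z.1 + res w.1
    ext a
    rfl
  · intro r
    apply Subtype.ext
    show res (algebraMap F (MonoidAlgebra F G) r) = algebraMap F (MonoidAlgebra F ↥C) r
    ext a
    rw [res_apply]
    simp only [MonoidAlgebra.coe_algebraMap, Function.comp_apply, Algebra.algebraMap_self, MonoidAlgebra.coeff_single,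
      RingHom.id_apply]
    rw [Finsupp.single_apply, Finsupp.single_apply]
    congr 1
    simp only [eq_iff_iff]
    constructor
    · intro h; exact Subtype.ext h.symm |>.symm
    · intro h; rw [← h]; rfl
end
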